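/- Let k be an algebraically closed field of characteristic zero, p, q ≥ 1 integers, c ∈ k*, and let D = a·∂x + b·∂y be a derivation of k[x,y] with D(x^q − c·y^p) = 0. Then there exists g ∈ k[x,y] such that a = c·p·y^{p−1}·g and b = q·x^{q−1}·g; equivalently, D = g·(c·p·y^{p−1}·∂x + q·x^{q−1}·∂y). -/

import Mathlib

open MvPolynomial

private lemma prime_X0 {k : Type*} [Field k] : Prime (X 0 : MvPolynomial (Fin 2) k) := by
  have : Prime ((finSuccEquiv k 1) (X 0)) := by
    rw [finSuccEquiv_X_zero]; exact Polynomial.prime_X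
  exact (MulEquiv.prime_iff (finSuccEquiv k 1).toMulEquiv).mp this

/-- If a derivation `D = a·∂x + b·∂y` of `k[x,y]` annihilates `x^q − c·y^p` (`c ≠ 0`),
then `D = g·(c·p·y^{p−1}·∂x + q·x^{q−1}·∂y)` for some `g ∈ k[x,y]`. -/
theorem derivation_killing_xq_sub_cyp {k : Type*} [Field k] [CharZero k] [IsAlgClosed k]
    (p q : ℕ) (hp : 1 ≤ p) (hq : 1 ≤ q) (c : k) (hc : c ≠ 0)
    (a b : MvPolynomial (Fin 2) k)
    (D : Derivation k (MvPolynomial (Fin 2) k) (MvPolynomial (Fin 2) k))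
    (hD : ∀ f, D f = a * pderiv (0 : Fin 2) f + b * pderiv (1 : Fin 2) f)
    (h : D (X 0 ^ q - C c * X 1 ^ p) = 0) :
    ∃ g : MvPolynomial (Fin 2) k,
      a = C c * (p : MvPolynomial (Fin 2) k) * X 1 ^ (p - 1) * g ∧
      b = (q : MvPolynomial (Fin 2) k) * X 0 ^ (q - 1) * g := by
  rw [hD] at h
  have h1 : pderiv (0 : Fin 2) ((X 0 : MvPolynomial (Fin 2) k) ^ q - C c * X 1 ^ p)
      = (q : MvPolynomial (Fin 2) k) * X 0 ^ (q-1) := by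
    simp [pderiv_pow, pderiv_X_of_ne, pderiv_C_mul]
  have h2 : pderiv (1 : Fin 2) ((X 0 : MvPolynomial (Fin 2) k) ^ q - C c * X 1 ^ p)
      = -(C c * (p : MvPolynomial (Fin 2) k) * X 1 ^ (p-1)) := by
    simp [pderiv_pow, pderiv_X_of_ne, pderiv_C_mul]; ring
  rw [h1, h2] at h
  have hq0 : ((q : k)) ≠ 0 := Nat.cast_ne_zero.mpr (by omega)
  have hp0 : ((p : k)) ≠ 0 := Nat.cast_ne_zero.mpr (by omega)
  have hqcast : ((q : ℕ) : MvPolynomial (Fin 2) k) = C ((q : k)) := by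
    simp [MvPolynomial.C_eq_smul_one]
  have hpcast : ((p : ℕ) : MvPolynomial (Fin 2) k) = C ((p : k)) := by
    simp [MvPolynomial.C_eq_smul_one]
  have heq : a * ((q : MvPolynomial (Fin 2) k) * X 0 ^ (q-1))
      = b * (C c * (p : MvPolynomial (Fin 2) k) * X 1 ^ (p-1)) := by
    linear_combination h
  have hX0 : Prime (X 0 : MvPolynomial (Fin 2) k) := prime_X0
  have hndvd : ¬ (X 0 : MvPolynomial (Fin 2) k) ∣
      C c * (p : MvPolynomial (Fin 2) k) * X 1 ^ (p-1) := by
    intro hd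
    rcases hX0.dvd_mul.mp hd with hd | hd
    · rcases hX0.dvd_mul.mp hd with hd | hd
      · exact hX0.not_unit (isUnit_of_dvd_unit hd
          ((isUnit_iff_ne_zero.mpr hc).map (C : k →+* MvPolynomial (Fin 2) k)))
      · rw [hpcast] at hd
        exact hX0.not_unit (isUnit_of_dvd_unit hd
          ((isUnit_iff_ne_zero.mpr hp0).map (C : k →+* MvPolynomial (Fin 2) k)))
    · have := hX0.dvd_of_dvd_pow hd
      rw [X_dvd_X] at this
      exact absurd this (by decide)
  have hb : (X 0 : MvPolynomial (Fin 2) k) ^ (q-1) ∣ b := by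
    exact hX0.pow_dvd_of_dvd_mul_right _ hndvd
      ⟨a * (q : MvPolynomial (Fin 2) k), by linear_combination -heq⟩
  obtain ⟨b', rfl⟩ := hb
  have hXne : (X 0 : MvPolynomial (Fin 2) k) ^ (q-1) ≠ 0 :=
    pow_ne_zero _ (X_ne_zero 0)
  have heq2 : a * C ((q : k)) = b' * (C c * C ((p : k)) * X 1 ^ (p-1)) := by
    apply mul_left_cancel₀ hXne
    rw [← hqcast, ← hpcast]
    linear_combination heq
  have hqinv : (C ((q : k)) : MvPolynomial (Fin 2) k) * C ((q : k))⁻¹ = 1 := by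
    rw [← C_mul, mul_inv_cancel₀ hq0, C_1]
  refine ⟨C ((q : k))⁻¹ * b', ?_, ?_⟩
  · rw [hpcast]
    calc a = a * (C ((q : k)) * C ((q : k))⁻¹) := by rw [hqinv, mul_one]
    _ = (a * C ((q : k))) * C ((q : k))⁻¹ := by ring
    _ = b' * (C c * C ((p : k)) * X 1 ^ (p-1)) * C ((q : k))⁻¹ := by rw [heq2]
    _ = C c * C ((p : k)) * X 1 ^ (p - 1) * (C ((q : k))⁻¹ * b') := by ring
  · rw [hqcast]
    calc (X 0 : MvPolynomial (Fin 2) k) ^ (q-1) * b'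
        = X 0 ^ (q-1) * b' * (C ((q : k)) * C ((q : k))⁻¹) := by rw [hqinv, mul_one]
    _ = C ((q : k)) * X 0 ^ (q - 1) * (C ((q : k))⁻¹ * b') := by ring
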